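/- (Uniform decay of correlations via uniform boundedness.) Let (Ω, μ, f) be a measure-preserving system, 𝓑₁, 𝓑₂ Banach spaces of measurable functions on Ω such that: constants belong to 𝓑₁; ψ ↦ ∫ψ dμ is continuous on 𝓑₁; the Koopman operator U ψ = ψ∘f is bounded on 𝓑₁; and 𝓑₂ embeds continuously in the dual of 𝓑₁ (via the pairing (ψ₁,ψ₂) ↦ ∫ψ₁ψ₂ dμ). Suppose (γ_n) is a nonincreasing sequence such that for every ψ₁ ∈ 𝓑₁ and ψ₂ ∈ 𝓑₂ there is a constant C_{ψ₁,ψ₂} with |∫ (ψ₁∘fⁿ) ψ₂ dμ − ∫ψ₁ dμ ∫ψ₂ dμ| ≤ C_{ψ₁,ψ₂} γ_n for all n. Then there exists K such that |∫ (ψ₁∘fⁿ) ψ₂ dμ − ∫ψ₁ dμ ∫ψ₂ dμ| ≤ K ‖ψ₁‖_{𝓑₁} ‖ψ₂‖_{𝓑₂} γ_n for all n, ψ₁, ψ₂. -/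
import Mathlib


open MeasureTheory

theorem uniform_decay_of_correlations
    {Ω : Type*} [MeasurableSpace Ω] (μ : Measure Ω) [IsProbabilityMeasure μ]
    (f : Ω → Ω) (hf : MeasurePreserving f μ μ)
    {B₁ B₂ : Type*}
    [NormedAddCommGroup B₁] [NormedSpace ℝ B₁] [CompleteSpace B₁]
    [NormedAddCommGroup B₂] [NormedSpace ℝ B₂] [CompleteSpace B₂]
    -- `B₁`, `B₂` are spaces of measurable functions on `Ω`, via linear inclusions:
    (j₁ : B₁ →ₗ[ℝ] (Ω → ℝ)) (j₂ : B₂ →ₗ[ℝ] (Ω → ℝ))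
    -- (i) the constant functions belong to `B₁`
    (hconst : ∃ one : B₁, j₁ one = fun _ => 1)
    -- (ii) integration against `μ` is a continuous linear functional on `B₁`
    (hint : ∃ I : B₁ →L[ℝ] ℝ, ∀ ψ, I ψ = ∫ x, j₁ ψ x ∂μ)
    -- (iii) the Koopman operator is a bounded operator on `B₁`
    (hkoop : ∃ U : B₁ →L[ℝ] B₁, ∀ ψ, j₁ (U ψ) = (j₁ ψ) ∘ f)
    -- (iv) `B₂` embeds continuously into the dual of `B₁` via the pairing
    (hdual : ∃ c : ℝ, ∀ (ψ₁ : B₁) (ψ₂ : B₂),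
      Integrable (fun x => j₁ ψ₁ x * j₂ ψ₂ x) μ ∧
      |∫ x, j₁ ψ₁ x * j₂ ψ₂ x ∂μ| ≤ c * ‖ψ₁‖ * ‖ψ₂‖)
    (γ : ℕ → ℝ) (hγpos : ∀ n, 0 ≤ γ n) (hγ : Antitone γ)
    -- decay of correlations with a pair-dependent constant:
    (hdecay : ∀ (ψ₁ : B₁) (ψ₂ : B₂), ∃ C : ℝ, ∀ n : ℕ,
      |(∫ x, j₁ ψ₁ (f^[n] x) * j₂ ψ₂ x ∂μ) -
        (∫ x, j₁ ψ₁ x ∂μ) * ∫ x, j₂ ψ₂ x ∂μ| ≤ C * γ n) :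
    ∃ K : ℝ, ∀ (n : ℕ) (ψ₁ : B₁) (ψ₂ : B₂),
      |(∫ x, j₁ ψ₁ (f^[n] x) * j₂ ψ₂ x ∂μ) -
        (∫ x, j₁ ψ₁ x ∂μ) * ∫ x, j₂ ψ₂ x ∂μ| ≤ K * ‖ψ₁‖ * ‖ψ₂‖ * γ n := by
  obtain ⟨one, hone⟩ := hconst
  obtain ⟨I, hI⟩ := hint
  obtain ⟨U, hU⟩ := hkoop
  obtain ⟨c, hc⟩ := hdual
  have hint2 : ∀ (ψ₁ : B₁) (ψ₂ : B₂),
      Integrable (fun x => j₁ ψ₁ x * j₂ ψ₂ x) μ := fun ψ₁ ψ₂ => (hc ψ₁ ψ₂).1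
  -- Koopman iterates
  have hUn : ∀ (n : ℕ) (ψ : B₁), j₁ ((U ^ n) ψ) = (j₁ ψ) ∘ f^[n] := by
    intro n
    induction n with
    | zero => intro ψ; simp
    | succ n ih =>
      intro ψ
      have : (U ^ (n + 1)) ψ = (U ^ n) (U ψ) := by
        rw [pow_succ]; rfl
      rw [this, ih (U ψ), hU ψ, Function.iterate_succ']
      rfl
  -- the pairing as a bilinear map
  let b : B₁ →ₗ[ℝ] B₂ →ₗ[ℝ] ℝ := LinearMap.mk₂ ℝ
    (fun ψ₁ ψ₂ => ∫ x, j₁ ψ₁ x * j₂ ψ₂ x ∂μ)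
    (by
      intro a a' ψ₂
      have : (fun x => j₁ (a + a') x * j₂ ψ₂ x)
          = fun x => j₁ a x * j₂ ψ₂ x + j₁ a' x * j₂ ψ₂ x := by
        funext x; simp [map_add, add_mul]
      simp only [this]
      exact integral_add (hint2 a ψ₂) (hint2 a' ψ₂))
    (by
      intro r a ψ₂
      have : (fun x => j₁ (r • a) x * j₂ ψ₂ x)
          = fun x => r • (j₁ a x * j₂ ψ₂ x) := by
        funext x; rw [j₁.map_smul]; simp only [Pi.smul_apply, smul_eq_mul]; ring
      simp only [this]
      rw [integral_smul])
    (by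
      intro a ψ₂ ψ₂'
      have : (fun x => j₁ a x * j₂ (ψ₂ + ψ₂') x)
          = fun x => j₁ a x * j₂ ψ₂ x + j₁ a x * j₂ ψ₂' x := by
        funext x; simp [map_add, mul_add]
      simp only [this]
      exact integral_add (hint2 a ψ₂) (hint2 a ψ₂'))
    (by
      intro r a ψ₂
      have : (fun x => j₁ a x * j₂ (r • ψ₂) x)
          = fun x => r • (j₁ a x * j₂ ψ₂ x) := by
        funext x; rw [j₂.map_smul]; simp only [Pi.smul_apply, smul_eq_mul]; ring
      simp only [this]
      rw [integral_smul])
  let P : B₁ →L[ℝ] B₂ →L[ℝ] ℝ := b.mkContinuous₂ c (by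
    intro ψ₁ ψ₂
    simpa [b, Real.norm_eq_abs] using (hc ψ₁ ψ₂).2)
  have hP : ∀ (ψ₁ : B₁) (ψ₂ : B₂), P ψ₁ ψ₂ = ∫ x, j₁ ψ₁ x * j₂ ψ₂ x ∂μ := by
    intro ψ₁ ψ₂; rfl
  -- correlation operators
  let T : ℕ → B₁ →L[ℝ] B₂ →L[ℝ] ℝ := fun n =>
    P.comp (U ^ n) - I.smulRight (P one)
  have hT : ∀ (n : ℕ) (ψ₁ : B₁) (ψ₂ : B₂), T n ψ₁ ψ₂ =
      (∫ x, j₁ ψ₁ (f^[n] x) * j₂ ψ₂ x ∂μ) -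
        (∫ x, j₁ ψ₁ x ∂μ) * ∫ x, j₂ ψ₂ x ∂μ := by
    intro n ψ₁ ψ₂
    have h1 : P ((U ^ n) ψ₁) ψ₂ = ∫ x, j₁ ψ₁ (f^[n] x) * j₂ ψ₂ x ∂μ := by
      rw [hP]
      congr 1
      funext x
      rw [hUn n ψ₁]
      rfl
    have h2 : P one ψ₂ = ∫ x, j₂ ψ₂ x ∂μ := by
      rw [hP, hone]
      simp
    simp only [T, ContinuousLinearMap.sub_apply, ContinuousLinearMap.comp_apply,
      ContinuousLinearMap.smulRight_apply, ContinuousLinearMap.coe_smul',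
      Pi.smul_apply, smul_eq_mul]
    rw [h1, h2, hI]
  -- normalized operators
  let S : ℕ → B₁ →L[ℝ] B₂ →L[ℝ] ℝ := fun n =>
    if γ n = 0 then 0 else (γ n)⁻¹ • T n
  -- first uniform boundedness: fix ψ₂
  have step1 : ∀ ψ₂ : B₂, ∃ C : ℝ, 0 ≤ C ∧ ∀ (n : ℕ) (ψ₁ : B₁),
      ‖S n ψ₁ ψ₂‖ ≤ C * ‖ψ₁‖ := by
    intro ψ₂
    have hpt : ∀ ψ₁ : B₁, ∃ C, ∀ n : ℕ, ‖((S n).flip ψ₂) ψ₁‖ ≤ C := by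
      intro ψ₁
      obtain ⟨C, hC⟩ := hdecay ψ₁ ψ₂
      refine ⟨max C 0, fun n => ?_⟩
      simp only [ContinuousLinearMap.flip_apply]
      by_cases h : γ n = 0
      · simp [S, h, le_max_right C 0]
      · have hpos : 0 < γ n := lt_of_le_of_ne (hγpos n) (Ne.symm h)
        have heq : S n ψ₁ ψ₂ = (γ n)⁻¹ * T n ψ₁ ψ₂ := by
          simp only [S, if_neg h, ContinuousLinearMap.coe_smul', Pi.smul_apply,
            ContinuousLinearMap.smul_apply, smul_eq_mul]
        have : ‖S n ψ₁ ψ₂‖ = (γ n)⁻¹ * ‖T n ψ₁ ψ₂‖ := by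
          rw [heq, Real.norm_eq_abs, Real.norm_eq_abs, abs_mul,
            abs_of_pos (inv_pos.mpr hpos)]
        rw [this]
        have hb : ‖T n ψ₁ ψ₂‖ ≤ C * γ n := by
          rw [Real.norm_eq_abs, hT]; exact hC n
        calc (γ n)⁻¹ * ‖T n ψ₁ ψ₂‖ ≤ (γ n)⁻¹ * (C * γ n) := by
              exact mul_le_mul_of_nonneg_left hb (le_of_lt (inv_pos.mpr hpos))
          _ = C := by field_simp
          _ ≤ max C 0 := le_max_left C 0
    obtain ⟨C, hC⟩ := banach_steinhaus hpt
    refine ⟨max C 0, le_max_right C 0, fun n ψ₁ => ?_⟩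
    calc ‖S n ψ₁ ψ₂‖ = ‖((S n).flip ψ₂) ψ₁‖ := rfl
      _ ≤ ‖(S n).flip ψ₂‖ * ‖ψ₁‖ := ContinuousLinearMap.le_opNorm _ _
      _ ≤ max C 0 * ‖ψ₁‖ := by
          apply mul_le_mul_of_nonneg_right _ (norm_nonneg _)
          exact le_trans (hC n) (le_max_left C 0)
  -- second uniform boundedness: over n and the unit ball of B₁
  have hpt2 : ∀ ψ₂ : B₂, ∃ C, ∀ p : ℕ × {ψ : B₁ // ‖ψ‖ ≤ 1},
      ‖(S p.1 p.2.1) ψ₂‖ ≤ C := by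
    intro ψ₂
    obtain ⟨C, hC0, hC⟩ := step1 ψ₂
    refine ⟨C, fun p => ?_⟩
    calc ‖S p.1 p.2.1 ψ₂‖ ≤ C * ‖p.2.1‖ := hC p.1 p.2.1
      _ ≤ C * 1 := mul_le_mul_of_nonneg_left p.2.2 hC0
      _ = C := mul_one C
  obtain ⟨K, hK⟩ := banach_steinhaus hpt2
  have hK0 : 0 ≤ K := le_trans (norm_nonneg _) (hK (0, ⟨0, by simp⟩))
  -- conclude: ‖S n ψ₁ ψ₂‖ ≤ K ‖ψ₁‖ ‖ψ₂‖ by scaling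
  have hSK : ∀ (n : ℕ) (ψ₁ : B₁) (ψ₂ : B₂), ‖S n ψ₁ ψ₂‖ ≤ K * ‖ψ₁‖ * ‖ψ₂‖ := by
    intro n ψ₁ ψ₂
    rcases eq_or_ne ψ₁ 0 with h | h
    · simp [h]
    · have hr : 0 < ‖ψ₁‖ := norm_pos_iff.mpr h
      have hmem : ‖(‖ψ₁‖⁻¹ • ψ₁ : B₁)‖ ≤ 1 := by
        rw [norm_smul, Real.norm_eq_abs, abs_of_pos (inv_pos.mpr hr),
          inv_mul_cancel₀ hr.ne']
      have h1 : ‖S n (‖ψ₁‖⁻¹ • ψ₁)‖ ≤ K := hK (n, ⟨‖ψ₁‖⁻¹ • ψ₁, hmem⟩)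
      have h2 : ‖S n (‖ψ₁‖⁻¹ • ψ₁) ψ₂‖ ≤ K * ‖ψ₂‖ :=
        le_trans (ContinuousLinearMap.le_opNorm _ _)
          (mul_le_mul_of_nonneg_right h1 (norm_nonneg _))
      have h3 : S n (‖ψ₁‖⁻¹ • ψ₁) ψ₂ = ‖ψ₁‖⁻¹ * S n ψ₁ ψ₂ := by
        rw [(S n).map_smul, ContinuousLinearMap.smul_apply, smul_eq_mul]
      rw [h3, Real.norm_eq_abs, abs_mul, abs_of_pos (inv_pos.mpr hr)] at h2
      have := mul_le_mul_of_nonneg_left h2 hr.le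
      rw [← mul_assoc, mul_inv_cancel₀ hr.ne', one_mul] at this
      calc ‖S n ψ₁ ψ₂‖ = |S n ψ₁ ψ₂| := rfl
        _ ≤ ‖ψ₁‖ * (K * ‖ψ₂‖) := this
        _ = K * ‖ψ₁‖ * ‖ψ₂‖ := by ring
  refine ⟨K, fun n ψ₁ ψ₂ => ?_⟩
  by_cases h : γ n = 0
  · obtain ⟨C, hC⟩ := hdecay ψ₁ ψ₂
    have := hC n
    rw [h, mul_zero] at this
    rw [h, mul_zero]
    exact this
  · have hpos : 0 < γ n := lt_of_le_of_ne (hγpos n) (Ne.symm h)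
    have heq : S n ψ₁ ψ₂ = (γ n)⁻¹ * T n ψ₁ ψ₂ := by
      simp only [S, if_neg h, ContinuousLinearMap.coe_smul', Pi.smul_apply,
        ContinuousLinearMap.smul_apply, smul_eq_mul]
    have hS : ‖S n ψ₁ ψ₂‖ = (γ n)⁻¹ * ‖T n ψ₁ ψ₂‖ := by
      rw [heq, Real.norm_eq_abs, Real.norm_eq_abs, abs_mul,
        abs_of_pos (inv_pos.mpr hpos)]
    have := hSK n ψ₁ ψ₂
    rw [hS] at this
    have h2 : ‖T n ψ₁ ψ₂‖ ≤ K * ‖ψ₁‖ * ‖ψ₂‖ * γ n := by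
      have := mul_le_mul_of_nonneg_left this hpos.le
      rw [← mul_assoc, mul_inv_cancel₀ hpos.ne', one_mul] at this
      linarith [this]
    rw [Real.norm_eq_abs, hT] at h2
    exact h2
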